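/- Let τ be a compact facet of a Newton polyhedron in ℝ²_{≥0} with vertices (k,l) and (m,n) where k < m and n < l. If neither of the following holds: (k = 0 and m = 1) or (n = 0 and l = 1), then (ml - nk)(ml - nk + k - m + n - l) + g²(n-m)(k-l) ≠ 0, where g = gcd(m-k, l-n), provided ml - nk + k - m + n - l > 0. -/

import Mathlib

/-- Auxiliary inequality: the case where the facet lies above the diagonal. -/
lemma stmt6_aux (a b k t g : ℤ) (ha : 1 ≤ a) (hb : 1 ≤ b) (hk : 0 ≤ k)
    (hg1 : 1 ≤ g) (hga : g ≤ a)
    (hB : k = 0 → 2 ≤ a) (ht : a < t) :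
    0 < (k * (a + b) + a * t + a * b) * ((k * (a + b) + a * t + a * b) - (a + b))
        - g ^ 2 * (t - a) * (t + b) := by
  set s := t + b with hs
  have hs1 : a + b + 1 ≤ s := by omega
  set u := k * (a + b) + a * t + a * b - g * s with hu
  have hu0 : 0 ≤ u := by
    have h1 : 0 ≤ (a - g) * s := mul_nonneg (by omega) (by omega)
    have h2 : 0 ≤ k * (a + b) := mul_nonneg hk (by omega)
    have h3 : u = k * (a + b) + (a - g) * s := by rw [hu, hs]; ring
    linarith
  have key : (k * (a + b) + a * t + a * b) * ((k * (a + b) + a * t + a * b) - (a + b))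
        - g ^ 2 * (t - a) * (t + b)
      = u ^ 2 + u * (2 * g * s - (a + b)) + (a + b) * (g * (s * (g - 1))) := by
    rw [hu, hs]; ring
  rw [key]
  rcases eq_or_lt_of_le hg1 with h1 | h2
  · -- g = 1
    have hg' : g = 1 := h1.symm
    subst hg'
    have hu2 : 2 ≤ u := by
      have h3 : u = k * (a + b) + (a - 1) * s := by rw [hu, hs]; ring
      rcases eq_or_lt_of_le hk with hk0 | hk1
      · have ha2 : 2 ≤ a := hB hk0.symm
        have : s ≤ (a - 1) * s := le_mul_of_one_le_left (by omega) (by omega)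
        have : 0 * (a + b) = k * (a + b) := by rw [hk0]
        linarith
      · have : 1 * (a + b) ≤ k * (a + b) := by
          apply mul_le_mul_of_nonneg_right (by omega) (by omega)
        have h4 : 0 ≤ (a - 1) * s := mul_nonneg (by omega) (by omega)
        linarith
    have hpos2 : 0 < 2 * 1 * s - (a + b) := by omega
    nlinarith [sq_nonneg u, mul_pos (by omega : (0:ℤ) < u) hpos2]
  · -- 2 ≤ g
    have h3 : 0 < (a + b) * (g * (s * (g - 1))) := by
      apply mul_pos (by omega)
      apply mul_pos (by omega)
      apply mul_pos (by omega) (by omega)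
    have h4 : 0 ≤ u * (2 * g * s - (a + b)) := by
      apply mul_nonneg hu0
      nlinarith
    nlinarith [sq_nonneg u]

/-- For a compact facet with vertices `(k,l)` and `(m,n)` that is not a
`B₁`-facet, the numerator factor `F` of the residue is nonzero. -/
theorem stmt6 (k l m n g : ℤ) (hk : 0 ≤ k) (hn : 0 ≤ n)
    (hkm : k < m) (hnl : n < l)
    (hg : g = (Int.gcd (m - k) (l - n) : ℤ))
    (hB : ¬((k = 0 ∧ m = 1) ∨ (n = 0 ∧ l = 1)))
    (hpos : 0 < m * l - n * k + k - m + n - l) :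
    (m * l - n * k) * (m * l - n * k + k - m + n - l)
        + g ^ 2 * (n - m) * (k - l) ≠ 0 := by
  have hmk : (0:ℤ) < m - k := by omega
  have hln : (0:ℤ) < l - n := by omega
  have hg1 : 1 ≤ g := by
    rw [hg]
    have : Int.gcd (m - k) (l - n) ≠ 0 := by
      simp [Int.gcd_eq_zero_iff]
      omega
    omega
  have hga : g ∣ (m - k) := hg ▸ Int.gcd_dvd_left (m - k) (l - n)
  have hgb : g ∣ (l - n) := hg ▸ Int.gcd_dvd_right (m - k) (l - n)
  have hga' : g ≤ m - k := Int.le_of_dvd hmk hga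
  have hgb' : g ≤ l - n := Int.le_of_dvd hln hgb
  push_neg at hB
  obtain ⟨hB1, hB2⟩ := hB
  have F_pos : 0 < (m * l - n * k) * (m * l - n * k + k - m + n - l)
        + g ^ 2 * (n - m) * (k - l) := by
    rcases lt_or_ge m n with hmn | hmn
    · -- facet above the diagonal: n > m
      have H := stmt6_aux (m - k) (l - n) k (n - k) g (by omega) (by omega) hk hg1 hga'
        (fun h => by have := hB1 h; omega) (by omega)
      nlinarith [H]
    · rcases lt_or_ge l k with hlk | hlk
      · -- facet below the diagonal: k > l
        have H := stmt6_aux (l - n) (m - k) n (k - n) g (by omega) (by omega) hn hg1 hgb'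
          (fun h => by have := hB2 h; omega) (by omega)
        nlinarith [H]
      · -- facet crossing the diagonal: n ≤ m and k ≤ l
        have h1 : 0 ≤ g ^ 2 * (n - m) * (k - l) := by
          have : 0 ≤ (m - n) * (l - k) := mul_nonneg (by omega) (by omega)
          nlinarith [sq_nonneg g]
        have h2 : 0 < m * l - n * k := by omega
        nlinarith [mul_pos h2 hpos]
  exact ne_of_gt F_pos
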